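/- Let C > 0 and H₀ ≥ 1 be real numbers, let a, b : [0,∞) → [0,∞) be Lebesgue integrable with A = ∫₀^∞ a(τ) dτ and B = ∫₀^∞ b(τ) dτ, and set h = exp(4C³H₀²A)·(H₀ + 8C³H₀³(A + B)). Assume A + B ≤ (ln 2)/(12C³h²). Let (Hₙ)_{n≥1} be a sequence of nonnegative measurable functions on [0,∞) such that H₁(t) ≤ 2Ch for all t ≥ 0, and for every n ≥ 1 and all t ≥ 0, H_{n+1}(t) ≤ C·exp(C·∫₀ᵗ a(τ)·Hₙ(τ)² dτ)·(H₀ + ∫₀ᵗ b(τ)·Hₙ(τ)³ dτ). Then Hₙ(t) ≤ 2Ch for every n ≥ 1 and every t ≥ 0. -/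

import Mathlib

open MeasureTheory

/-- Inductive uniform bound for the Friedrichs approximations (Section 2.2):
under the smallness condition A + B ≤ ln 2/(12C³h²), every Hₙ is bounded by 2Ch. -/
theorem stmt_17 (C H₀ : ℝ) (hC : 0 < C) (hH₀ : 1 ≤ H₀)
    (a b : ℝ → ℝ)
    (ha_nonneg : ∀ t, 0 ≤ t → 0 ≤ a t) (hb_nonneg : ∀ t, 0 ≤ t → 0 ≤ b t)
    (ha_int : IntegrableOn a (Set.Ici 0)) (hb_int : IntegrableOn b (Set.Ici 0))
    (A B : ℝ) (hA : A = ∫ τ in Set.Ici (0:ℝ), a τ) (hB : B = ∫ τ in Set.Ici (0:ℝ), b τ)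
    (h : ℝ) (hh : h = Real.exp (4 * C ^ 3 * H₀ ^ 2 * A) * (H₀ + 8 * C ^ 3 * H₀ ^ 3 * (A + B)))
    (hsmall : A + B ≤ Real.log 2 / (12 * C ^ 3 * h ^ 2))
    (H : ℕ → ℝ → ℝ)
    (hH_meas : ∀ n, 1 ≤ n → Measurable (H n))
    (hH_nonneg : ∀ n, 1 ≤ n → ∀ t, 0 ≤ t → 0 ≤ H n t)
    (hH1 : ∀ t, 0 ≤ t → H 1 t ≤ 2 * C * h)
    (hrec : ∀ n, 1 ≤ n → ∀ t, 0 ≤ t →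
      H (n + 1) t ≤ C * Real.exp (C * ∫ τ in Set.Ioc 0 t, a τ * H n τ ^ 2) *
        (H₀ + ∫ τ in Set.Ioc 0 t, b τ * H n τ ^ 3)) :
    ∀ n, 1 ≤ n → ∀ t, 0 ≤ t → H n t ≤ 2 * C * h := by
  have hA0 : 0 ≤ A := by
    rw [hA]; exact setIntegral_nonneg measurableSet_Ici (fun τ hτ => ha_nonneg τ hτ)
  have hB0 : 0 ≤ B := by
    rw [hB]; exact setIntegral_nonneg measurableSet_Ici (fun τ hτ => hb_nonneg τ hτ)
  have hexp1 : (1:ℝ) ≤ Real.exp (4 * C ^ 3 * H₀ ^ 2 * A) := Real.one_le_exp (by positivity)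
  have hs0 : 0 ≤ 8 * C ^ 3 * H₀ ^ 3 * (A + B) := by positivity
  have hH0h : H₀ ≤ h := by
    rw [hh]
    nlinarith [hexp1, hs0, hH₀]
  have hhpos : 0 < h := lt_of_lt_of_le (by linarith) hH0h
  have hL : Real.log 2 < 0.6932 := by
    have := Real.log_two_lt_d9; linarith
  have hLpos : 0 < Real.log 2 := Real.log_pos (by norm_num)
  -- smallness rearranged
  have hKpos : 0 < 12 * C ^ 3 * h ^ 2 := by positivity
  have hs : 12 * C ^ 3 * h ^ 2 * (A + B) ≤ Real.log 2 := by
    have := (le_div_iff₀ hKpos).1 hsmall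
    nlinarith [this]
  have hCA3 : 0 ≤ 12 * C ^ 3 * h ^ 2 * A := by positivity
  have hCB3 : 0 ≤ 12 * C ^ 3 * h ^ 2 * B := by positivity
  have hxa : 4 * C ^ 3 * h ^ 2 * A ≤ Real.log 2 / 3 := by nlinarith
  have hyb : 8 * C ^ 3 * h ^ 3 * B ≤ 2 * h * Real.log 2 / 3 := by nlinarith [hhpos]
  -- bound on exp(log 2 / 3)
  have hE3 : (Real.exp (Real.log 2 / 3)) ^ 3 = 2 := by
    rw [← Real.exp_nat_mul]
    push_cast
    rw [show (3:ℝ) * (Real.log 2 / 3) = Real.log 2 by ring, Real.exp_log (by norm_num)]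
  have hEpos : 0 < Real.exp (Real.log 2 / 3) := Real.exp_pos _
  have hEb : Real.exp (Real.log 2 / 3) ≤ 1.26 := by
    nlinarith [hE3, hEpos, sq_nonneg (Real.exp (Real.log 2 / 3) - 1.26),
      sq_nonneg (Real.exp (Real.log 2 / 3) + 1.26)]
  -- the key numerical bound
  have key : Real.exp (4 * C ^ 3 * h ^ 2 * A) * (H₀ + 8 * C ^ 3 * h ^ 3 * B) ≤ 2 * h := by
    have hE : Real.exp (4 * C ^ 3 * h ^ 2 * A) ≤ Real.exp (Real.log 2 / 3) :=
      Real.exp_le_exp.2 hxa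
    have h8 : 0 ≤ 8 * C ^ 3 * h ^ 3 * B := by positivity
    have hsum : H₀ + 8 * C ^ 3 * h ^ 3 * B ≤ h + 2 * h * Real.log 2 / 3 := by linarith
    calc Real.exp (4 * C ^ 3 * h ^ 2 * A) * (H₀ + 8 * C ^ 3 * h ^ 3 * B)
        ≤ 1.26 * (h + 2 * h * Real.log 2 / 3) := by
          apply mul_le_mul (hE.trans hEb) hsum (by linarith) (by norm_num)
      _ ≤ 2 * h := by nlinarith [mul_le_mul_of_nonneg_left hL.le hhpos.le]
  intro n hn
  induction n, hn using Nat.le_induction with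
  | base => exact hH1
  | succ n hn IH =>
    intro t ht
    have hMpos : 0 < 2 * C * h := by positivity
    set Ia := ∫ τ in Set.Ioc 0 t, a τ * H n τ ^ 2 with hIa_def
    set Ib := ∫ τ in Set.Ioc 0 t, b τ * H n τ ^ 3 with hIb_def
    clear_value Ia Ib
    have ha_int' : IntegrableOn a (Set.Ioc 0 t) := ha_int.mono_set (Set.Ioc_subset_Ioi_self.trans Set.Ioi_subset_Ici_self)
    have hb_int' : IntegrableOn b (Set.Ioc 0 t) := hb_int.mono_set (Set.Ioc_subset_Ioi_self.trans Set.Ioi_subset_Ici_self)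
    have ha_meas : AEStronglyMeasurable a (volume.restrict (Set.Ioc 0 t)) :=
      ha_int'.aestronglyMeasurable
    have hb_meas : AEStronglyMeasurable b (volume.restrict (Set.Ioc 0 t)) :=
      hb_int'.aestronglyMeasurable
    have hga_int : IntegrableOn (fun τ => a τ * (2 * C * h) ^ 2) (Set.Ioc 0 t) :=
      ha_int'.mul_const _
    have hgb_int : IntegrableOn (fun τ => b τ * (2 * C * h) ^ 3) (Set.Ioc 0 t) :=
      hb_int'.mul_const _
    have hfa_int : IntegrableOn (fun τ => a τ * H n τ ^ 2) (Set.Ioc 0 t) := by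
      apply Integrable.mono' hga_int
        (ha_meas.mul ((hH_meas n hn).pow_const 2).aestronglyMeasurable)
      filter_upwards [ae_restrict_mem measurableSet_Ioc] with τ hτ
      simp only [Pi.mul_apply]
      have h1 : 0 ≤ a τ := ha_nonneg τ hτ.1.le
      have h2 : 0 ≤ H n τ := hH_nonneg n hn τ hτ.1.le
      have h3 : H n τ ≤ 2 * C * h := IH τ hτ.1.le
      rw [Real.norm_eq_abs, abs_of_nonneg (mul_nonneg h1 (pow_nonneg h2 _))]
      exact mul_le_mul_of_nonneg_left (pow_le_pow_left₀ h2 h3 2) h1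
    have hfb_int : IntegrableOn (fun τ => b τ * H n τ ^ 3) (Set.Ioc 0 t) := by
      apply Integrable.mono' hgb_int
        (hb_meas.mul ((hH_meas n hn).pow_const 3).aestronglyMeasurable)
      filter_upwards [ae_restrict_mem measurableSet_Ioc] with τ hτ
      simp only [Pi.mul_apply]
      have h1 : 0 ≤ b τ := hb_nonneg τ hτ.1.le
      have h2 : 0 ≤ H n τ := hH_nonneg n hn τ hτ.1.le
      have h3 : H n τ ≤ 2 * C * h := IH τ hτ.1.le
      rw [Real.norm_eq_abs, abs_of_nonneg (mul_nonneg h1 (pow_nonneg h2 _))]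
      exact mul_le_mul_of_nonneg_left (pow_le_pow_left₀ h2 h3 3) h1
    have hIa_le : Ia ≤ (2 * C * h) ^ 2 * A := by
      have h1 : Ia ≤ ∫ τ in Set.Ioc 0 t, a τ * (2 * C * h) ^ 2 := by
        rw [hIa_def]
        apply setIntegral_mono_on hfa_int hga_int measurableSet_Ioc
        intro τ hτ
        exact mul_le_mul_of_nonneg_left
          (pow_le_pow_left₀ (hH_nonneg n hn τ hτ.1.le) (IH τ hτ.1.le) 2)
          (ha_nonneg τ hτ.1.le)
      have h2 : ∫ τ in Set.Ioc 0 t, a τ * (2 * C * h) ^ 2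
          = (∫ τ in Set.Ioc 0 t, a τ) * (2 * C * h) ^ 2 := integral_mul_const _ _
      have h3 : ∫ τ in Set.Ioc 0 t, a τ ≤ A := by
        rw [hA]
        apply setIntegral_mono_set ha_int
        · exact (ae_restrict_mem measurableSet_Ici).mono (fun τ hτ => ha_nonneg τ hτ)
        · exact HasSubset.Subset.eventuallyLE (Set.Ioc_subset_Ioi_self.trans Set.Ioi_subset_Ici_self)
      calc Ia ≤ (∫ τ in Set.Ioc 0 t, a τ) * (2 * C * h) ^ 2 := h1.trans_eq h2
        _ ≤ A * (2 * C * h) ^ 2 := mul_le_mul_of_nonneg_right h3 (sq_nonneg _)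
        _ = (2 * C * h) ^ 2 * A := by ring
    have hIb_le : Ib ≤ (2 * C * h) ^ 3 * B := by
      have h1 : Ib ≤ ∫ τ in Set.Ioc 0 t, b τ * (2 * C * h) ^ 3 := by
        rw [hIb_def]
        apply setIntegral_mono_on hfb_int hgb_int measurableSet_Ioc
        intro τ hτ
        exact mul_le_mul_of_nonneg_left
          (pow_le_pow_left₀ (hH_nonneg n hn τ hτ.1.le) (IH τ hτ.1.le) 3)
          (hb_nonneg τ hτ.1.le)
      have h2 : ∫ τ in Set.Ioc 0 t, b τ * (2 * C * h) ^ 3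
          = (∫ τ in Set.Ioc 0 t, b τ) * (2 * C * h) ^ 3 := integral_mul_const _ _
      have h3 : ∫ τ in Set.Ioc 0 t, b τ ≤ B := by
        rw [hB]
        apply setIntegral_mono_set hb_int
        · exact (ae_restrict_mem measurableSet_Ici).mono (fun τ hτ => hb_nonneg τ hτ)
        · exact HasSubset.Subset.eventuallyLE (Set.Ioc_subset_Ioi_self.trans Set.Ioi_subset_Ici_self)
      calc Ib ≤ (∫ τ in Set.Ioc 0 t, b τ) * (2 * C * h) ^ 3 := h1.trans_eq h2
        _ ≤ B * (2 * C * h) ^ 3 := mul_le_mul_of_nonneg_right h3 (pow_pos hMpos 3).le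
        _ = (2 * C * h) ^ 3 * B := by ring
    have hIb_nonneg : 0 ≤ Ib := hIb_def ▸
      setIntegral_nonneg measurableSet_Ioc (fun τ hτ =>
        mul_nonneg (hb_nonneg τ hτ.1.le) (pow_nonneg (hH_nonneg n hn τ hτ.1.le) 3))
    have e1 : C * Real.exp (C * Ia) ≤ C * Real.exp (4 * C ^ 3 * h ^ 2 * A) := by
      apply mul_le_mul_of_nonneg_left _ hC.le
      apply Real.exp_le_exp.2
      calc C * Ia ≤ C * ((2 * C * h) ^ 2 * A) := mul_le_mul_of_nonneg_left hIa_le hC.le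
        _ = 4 * C ^ 3 * h ^ 2 * A := by ring
    have e2 : H₀ + Ib ≤ H₀ + 8 * C ^ 3 * h ^ 3 * B :=
      add_le_add (le_refl H₀) (hIb_le.trans_eq (by ring))
    calc H (n + 1) t
        ≤ C * Real.exp (C * Ia) * (H₀ + Ib) := by rw [hIa_def, hIb_def]; exact hrec n hn t ht
      _ ≤ C * Real.exp (4 * C ^ 3 * h ^ 2 * A) * (H₀ + 8 * C ^ 3 * h ^ 3 * B) :=
          mul_le_mul e1 e2 (by linarith) (by positivity)
      _ = C * (Real.exp (4 * C ^ 3 * h ^ 2 * A) * (H₀ + 8 * C ^ 3 * h ^ 3 * B)) := by ring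
      _ ≤ C * (2 * h) := mul_le_mul_of_nonneg_left key hC.le
      _ = 2 * C * h := by ring
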